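/- For any finite subgroup K of ℍˣ, the set {h ∈ K : D₁(h) lies in the subgroup of GL₂(ℍ) generated by {M_b : b ∈ K}} equals the commutator subgroup [K, K] of K. -/

import Mathlib

noncomputable section

open Matrix

local notation "ℍ" => Quaternion ℝ

/-- The binary operation `a ∘ b = a * b⁻¹ * a`. -/
def circ {K : Type*} [Group K] (a b : K) : K := a * b⁻¹ * a

/-- A set is closed under `circ`. -/
def CircClosed {K : Type*} [Group K] (S : Set K) : Prop :=
  ∀ a ∈ S, ∀ b ∈ S, circ a b ∈ S

/-- The closure of a set under `circ`: the smallest superset closed under `circ`. -/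
def circClosure {K : Type*} [Group K] (X : Set K) : Set K :=
  ⋂₀ {S : Set K | X ⊆ S ∧ CircClosed S}

/-- `L` is a reflection system for the subgroup `K`. -/
def IsReflectionSystem {G : Type*} [Group G] (K : Subgroup G) (L : Set G) : Prop :=
  Subgroup.closure L = K ∧ CircClosed L ∧ (1 : G) ∈ L

/-- `H` is a normal subgroup of `K` (both given as subgroups of an ambient group). -/
def NormalIn {G : Type*} [Group G] (H K : Subgroup G) : Prop :=
  H ≤ K ∧ ∀ k ∈ K, ∀ h ∈ H, k * h * k⁻¹ ∈ H

/-- The set `L·H`. -/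
def mulSet {G : Type*} [Group G] (L : Set G) (H : Subgroup G) : Set G :=
  {x | ∃ l ∈ L, ∃ h ∈ H, x = l * h}

/-- The orbit of `b` in `L`: smallest subset of `L` containing `b` and closed under
`x ↦ a ∘ x` for all `a ∈ L`. -/
def orb {K : Type*} [Group K] (L : Set K) (b : K) : Set K :=
  ⋂₀ {S : Set K | b ∈ S ∧ S ⊆ L ∧ ∀ a ∈ L, ∀ x ∈ S, circ a x ∈ S}

lemma mk_ne_zero_re {a b c d : ℝ} (h : a ≠ 0) : (⟨a,b,c,d⟩ : ℍ) ≠ 0 :=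
  fun h0 => h (congrArg QuaternionAlgebra.re h0)

lemma mk_ne_zero_imI {a b c d : ℝ} (h : b ≠ 0) : (⟨a,b,c,d⟩ : ℍ) ≠ 0 :=
  fun h0 => h (congrArg QuaternionAlgebra.imI h0)

lemma mk_ne_zero_imJ {a b c d : ℝ} (h : c ≠ 0) : (⟨a,b,c,d⟩ : ℍ) ≠ 0 :=
  fun h0 => h (congrArg QuaternionAlgebra.imJ h0)

lemma mk_ne_zero_imK {a b c d : ℝ} (h : d ≠ 0) : (⟨a,b,c,d⟩ : ℍ) ≠ 0 :=
  fun h0 => h (congrArg QuaternionAlgebra.imK h0)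

/-- The quaternion `i` as a unit. -/
def iU : ℍˣ := Units.mk0 (⟨0,1,0,0⟩ : ℍ) (mk_ne_zero_imI one_ne_zero)

/-- The quaternion `j` as a unit. -/
def jU : ℍˣ := Units.mk0 (⟨0,0,1,0⟩ : ℍ) (mk_ne_zero_imJ one_ne_zero)

/-- The quaternion `k` as a unit. -/
def kU : ℍˣ := Units.mk0 (⟨0,0,0,1⟩ : ℍ) (mk_ne_zero_imK one_ne_zero)

/-- The quaternion `ζ = (1+i+j+k)/2` as a unit. -/
def zetaU : ℍˣ := Units.mk0 (⟨1/2,1/2,1/2,1/2⟩ : ℍ) (mk_ne_zero_re (by norm_num))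

/-- The quaternion `(1+i)/√2` as a unit. -/
def e1iU : ℍˣ :=
  Units.mk0 (⟨1/Real.sqrt 2, 1/Real.sqrt 2, 0, 0⟩ : ℍ)
    (mk_ne_zero_re (by positivity))

/-- The quaternion `(j-k)/√2` as a unit. -/
def jmkU : ℍˣ :=
  Units.mk0 (⟨0, 0, 1/Real.sqrt 2, -(1/Real.sqrt 2)⟩ : ℍ)
    (mk_ne_zero_imJ (by positivity))

/-- The quaternion `(1 + τ i + σ j)/2`, `τ = (1+√5)/2`, `σ = (1-√5)/2`, as a unit. -/
def iotaU : ℍˣ :=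
  Units.mk0 (⟨1/2, ((1+Real.sqrt 5)/2)/2, ((1-Real.sqrt 5)/2)/2, 0⟩ : ℍ)
    (mk_ne_zero_re (by norm_num))

lemma omega_ne_zero (n : ℕ) :
    (⟨Real.cos (Real.pi / n), Real.sin (Real.pi / n), 0, 0⟩ : ℍ) ≠ 0 := by
  intro h
  have h1 : Real.cos (Real.pi / n) = 0 := congrArg QuaternionAlgebra.re h
  have h2 : Real.sin (Real.pi / n) = 0 := congrArg QuaternionAlgebra.imI h
  have := Real.sin_sq_add_cos_sq (Real.pi / n)
  rw [h1, h2] at this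
  norm_num at this

/-- The primitive `2n`-th root of unity `ω = cos(π/n) + sin(π/n) i` as a unit quaternion. -/
def omegaU (n : ℕ) : ℍˣ :=
  Units.mk0 (⟨Real.cos (Real.pi / n), Real.sin (Real.pi / n), 0, 0⟩ : ℍ) (omega_ne_zero n)

/-- The dicyclic group `𝒟ₙ = ⟨ω, j⟩` of order `4n`. -/
def dicyclic (n : ℕ) : Subgroup ℍˣ := Subgroup.closure {omegaU n, jU}

/-- The binary tetrahedral group `𝒯`. -/
def binTet : Subgroup ℍˣ := Subgroup.closure {iU, zetaU}

/-- The binary octahedral group `𝒪`. -/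
def binOct : Subgroup ℍˣ := Subgroup.closure {e1iU, zetaU}

/-- The binary icosahedral group `ℐ`. -/
def binIco : Subgroup ℍˣ := Subgroup.closure {iU, zetaU, iotaU}

/-- `GL₂(ℍ)` as the unit group of the matrix ring. -/
abbrev GL2H := (Matrix (Fin 2) (Fin 2) ℍ)ˣ

def M2 (b : ℍˣ) : Matrix (Fin 2) (Fin 2) ℍ := !![0, (b : ℍ); ((b⁻¹ : ℍˣ) : ℍ), 0]

lemma M2_mul_self (b : ℍˣ) : M2 b * M2 b = 1 := by
  refine Matrix.ext fun i j => ?_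
  fin_cases i <;> fin_cases j <;>
    simp [M2, Matrix.mul_apply, Fin.sum_univ_two, Matrix.one_apply]

/-- The matrix `M_b = [[0, b], [b⁻¹, 0]]` as an element of `GL₂(ℍ)`. -/
def Mb (b : ℍˣ) : GL2H := ⟨M2 b, M2 b, M2_mul_self b, M2_mul_self b⟩

def D1M (h : ℍˣ) : Matrix (Fin 2) (Fin 2) ℍ := !![(h : ℍ), 0; 0, 1]

lemma D1M_mul_inv (h : ℍˣ) : D1M h * D1M h⁻¹ = 1 := by
  refine Matrix.ext fun i j => ?_
  fin_cases i <;> fin_cases j <;>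
    simp [D1M, Matrix.mul_apply, Fin.sum_univ_two, Matrix.one_apply]

lemma D1M_inv_mul (h : ℍˣ) : D1M h⁻¹ * D1M h = 1 := by
  refine Matrix.ext fun i j => ?_
  fin_cases i <;> fin_cases j <;>
    simp [D1M, Matrix.mul_apply, Fin.sum_univ_two, Matrix.one_apply]

/-- The matrix `D₁(h) = diag(h, 1)` as an element of `GL₂(ℍ)`. -/
def D1 (h : ℍˣ) : GL2H := ⟨D1M h, D1M h⁻¹, D1M_mul_inv h, D1M_inv_mul h⟩

def D2M (h : ℍˣ) : Matrix (Fin 2) (Fin 2) ℍ := !![1, 0; 0, (h : ℍ)]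

lemma D2M_mul_inv (h : ℍˣ) : D2M h * D2M h⁻¹ = 1 := by
  refine Matrix.ext fun i j => ?_
  fin_cases i <;> fin_cases j <;>
    simp [D2M, Matrix.mul_apply, Fin.sum_univ_two, Matrix.one_apply]

lemma D2M_inv_mul (h : ℍˣ) : D2M h⁻¹ * D2M h = 1 := by
  refine Matrix.ext fun i j => ?_
  fin_cases i <;> fin_cases j <;>
    simp [D2M, Matrix.mul_apply, Fin.sum_univ_two, Matrix.one_apply]

/-- The matrix `D₂(h) = diag(1, h)` as an element of `GL₂(ℍ)`. -/
def D2 (h : ℍˣ) : GL2H := ⟨D2M h, D2M h⁻¹, D2M_mul_inv h, D2M_inv_mul h⟩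

/-- The group `G(K, L, H)`, generated by `D₁(H)`, `D₂(H)` and `M_L`. -/
def GKLH (H : Subgroup ℍˣ) (L : Set ℍˣ) : Subgroup GL2H :=
  Subgroup.closure (D1 '' (H : Set ℍˣ) ∪ D2 '' (H : Set ℍˣ) ∪ Mb '' L)

/-- `G(K,L,H)` is in canonical form: every `b ∈ K` with `M_b ∈ G(K,L,H)` lies in `L`. -/
def CanonicalForm (K : Subgroup ℍˣ) (H : Subgroup ℍˣ) (L : Set ℍˣ) : Prop :=
  ∀ b : ℍˣ, b ∈ K → Mb b ∈ GKLH H L → b ∈ L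

/-- A reflection: a non-identity element fixing a nonzero vector. -/
def IsReflection (g : GL2H) : Prop :=
  g ≠ 1 ∧ ∃ v : Fin 2 → ℍ, v ≠ 0 ∧ Matrix.mulVec (Units.val g) v = v

/-- The number of reflections in a subgroup of `GL₂(ℍ)`. -/
def reflCount (G : Subgroup GL2H) : ℕ :=
  Nat.card {g : GL2H // g ∈ G ∧ IsReflection g}

/-- The index set `Ω_n`. -/
def OmegaMem (n a b : ℕ) : Prop :=
  1 ≤ a ∧ a ≤ b ∧ b ≤ n ∧ a ∣ n ∧ b ∣ n ∧ Nat.gcd a b = 1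

/-- The reflection system `L⁽ⁿ⁾₍ₐ,ᵦ₎`. -/
def Lab (n a b : ℕ) : Set ℍˣ :=
  {x | ∃ m, 1 ≤ m ∧ m ≤ 2 * n / a ∧ x = omegaU n ^ (m * a)} ∪
  {x | ∃ l, 1 ≤ l ∧ l ≤ 2 * n / b ∧ x = omegaU n ^ (l * b) * jU}

/-- The reflection group `G(n, a, b, r)`. -/
def Gnabr (n a b r : ℕ) : Subgroup GL2H :=
  Subgroup.closure
    ({Mb 1, Mb (omegaU n ^ a), Mb jU, Mb (omegaU n ^ b * jU), D1 (omegaU n ^ (2 * n / r))})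


-- diagU / antidiagU
lemma dU_mul_proof (p q : ℍˣ) :
    (!![(p:ℍ),0;0,(q:ℍ)]) * (!![((p⁻¹:ℍˣ):ℍ),0;0,((q⁻¹:ℍˣ):ℍ)]) = 1 := by
  refine Matrix.ext fun i j => ?_
  fin_cases i <;> fin_cases j <;>
    simp [Matrix.mul_apply, Fin.sum_univ_two, Matrix.one_apply]
lemma dU_inv_proof (p q : ℍˣ) :
    (!![((p⁻¹:ℍˣ):ℍ),0;0,((q⁻¹:ℍˣ):ℍ)]) * (!![(p:ℍ),0;0,(q:ℍ)]) = 1 := by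
  refine Matrix.ext fun i j => ?_
  fin_cases i <;> fin_cases j <;>
    simp [Matrix.mul_apply, Fin.sum_univ_two, Matrix.one_apply]
def dU (p q : ℍˣ) : GL2H :=
  ⟨!![(p:ℍ),0;0,(q:ℍ)], !![((p⁻¹:ℍˣ):ℍ),0;0,((q⁻¹:ℍˣ):ℍ)], dU_mul_proof p q, dU_inv_proof p q⟩
lemma aU_mul_proof (p q : ℍˣ) :
    (!![0,(p:ℍ);(q:ℍ),0]) * (!![0,((q⁻¹:ℍˣ):ℍ);((p⁻¹:ℍˣ):ℍ),0]) = 1 := by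
  refine Matrix.ext fun i j => ?_
  fin_cases i <;> fin_cases j <;>
    simp [Matrix.mul_apply, Fin.sum_univ_two, Matrix.one_apply]
lemma aU_inv_proof (p q : ℍˣ) :
    (!![0,((q⁻¹:ℍˣ):ℍ);((p⁻¹:ℍˣ):ℍ),0]) * (!![0,(p:ℍ);(q:ℍ),0]) = 1 := by
  refine Matrix.ext fun i j => ?_
  fin_cases i <;> fin_cases j <;>
    simp [Matrix.mul_apply, Fin.sum_univ_two, Matrix.one_apply]
def aU (p q : ℍˣ) : GL2H :=
  ⟨!![0,(p:ℍ);(q:ℍ),0], !![0,((q⁻¹:ℍˣ):ℍ);((p⁻¹:ℍˣ):ℍ),0], aU_mul_proof p q, aU_inv_proof p q⟩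

lemma dU_mul_dU (p q p' q' : ℍˣ) : dU p q * dU p' q' = dU (p*p') (q*q') := by
  refine Units.ext (Matrix.ext fun i j => ?_)
  fin_cases i <;> fin_cases j <;>
    simp [dU, Units.val_mul, Matrix.mul_apply, Fin.sum_univ_two]
lemma dU_mul_aU (p q p' q' : ℍˣ) : dU p q * aU p' q' = aU (p*p') (q*q') := by
  refine Units.ext (Matrix.ext fun i j => ?_)
  fin_cases i <;> fin_cases j <;>
    simp [dU, aU, Units.val_mul, Matrix.mul_apply, Fin.sum_univ_two]
lemma aU_mul_dU (p q p' q' : ℍˣ) : aU p q * dU p' q' = aU (p*q') (q*p') := by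
  refine Units.ext (Matrix.ext fun i j => ?_)
  fin_cases i <;> fin_cases j <;>
    simp [dU, aU, Units.val_mul, Matrix.mul_apply, Fin.sum_univ_two]
lemma aU_mul_aU (p q p' q' : ℍˣ) : aU p q * aU p' q' = dU (p*q') (q*p') := by
  refine Units.ext (Matrix.ext fun i j => ?_)
  fin_cases i <;> fin_cases j <;>
    simp [dU, aU, Units.val_mul, Matrix.mul_apply, Fin.sum_univ_two]
lemma dU_inv (p q : ℍˣ) : (dU p q)⁻¹ = dU p⁻¹ q⁻¹ := by
  refine Units.ext ?_
  simp only [dU]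
  rfl
lemma aU_inv (p q : ℍˣ) : (aU p q)⁻¹ = aU q⁻¹ p⁻¹ := by
  refine Units.ext ?_
  simp only [aU]
  rfl
lemma dU_one : dU 1 1 = 1 := by
  refine Units.ext ?_
  simp [dU, Matrix.one_fin_two]
lemma Mb_eq (b : ℍˣ) : Mb b = aU b b⁻¹ := Units.ext rfl
lemma D1_eq (h : ℍˣ) : D1 h = dU h 1 := by
  refine Units.ext ?_
  simp [D1, D1M, dU]

/-- abelian bookkeeping lemmas -/
lemma of_aux1 {K : Subgroup ℍˣ} {p q p' q' : K}
    (h : Abelianization.of p * Abelianization.of q = 1)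
    (h' : Abelianization.of p' * Abelianization.of q' = 1) :
    Abelianization.of (p * p') * Abelianization.of (q * q') = 1 := by
  rw [_root_.map_mul, _root_.map_mul, mul_mul_mul_comm, h, h', one_mul]

lemma of_aux2 {K : Subgroup ℍˣ} {p q p' q' : K}
    (h : Abelianization.of p * Abelianization.of q = 1)
    (h' : Abelianization.of p' * Abelianization.of q' = 1) :
    Abelianization.of (p * q') * Abelianization.of (q * p') = 1 := by
  rw [_root_.map_mul, _root_.map_mul, mul_mul_mul_comm, h, one_mul, mul_comm, h']

/-- The parity/abelianization bookkeeping subgroup. -/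
def Sgrp (K : Subgroup ℍˣ) : Subgroup GL2H where
  carrier := {g | ∃ p q : K, Abelianization.of p * Abelianization.of q = 1 ∧
      (g = dU (p : ℍˣ) (q : ℍˣ) ∨ g = aU (p : ℍˣ) (q : ℍˣ))}
  one_mem' := ⟨1, 1, by simp, Or.inl (by simp [dU_one])⟩
  mul_mem' := by
    rintro x y ⟨p, q, hpq, hx | hx⟩ ⟨p', q', hpq', hy | hy⟩ <;> subst hx <;> subst hy
    · exact ⟨p * p', q * q', of_aux1 hpq hpq', Or.inl (dU_mul_dU ..)⟩
    · exact ⟨p * p', q * q', of_aux1 hpq hpq', Or.inr (dU_mul_aU ..)⟩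
    · exact ⟨p * q', q * p', of_aux2 hpq hpq', Or.inr (aU_mul_dU ..)⟩
    · exact ⟨p * q', q * p', of_aux2 hpq hpq', Or.inl (aU_mul_aU ..)⟩
  inv_mem' := by
    rintro x ⟨p, q, hpq, hx | hx⟩ <;> subst hx
    · refine ⟨p⁻¹, q⁻¹, ?_, Or.inl (by rw [dU_inv]; rfl)⟩
      rw [map_inv, map_inv, ← _root_.mul_inv_rev, mul_comm (Abelianization.of q), hpq, inv_one]
    · refine ⟨q⁻¹, p⁻¹, ?_, Or.inr (by rw [aU_inv]; rfl)⟩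
      rw [map_inv, map_inv, ← _root_.mul_inv_rev, hpq, inv_one]

lemma mem_Sgrp {K : Subgroup ℍˣ} {g : GL2H} :
    g ∈ Sgrp K ↔ ∃ p q : K, Abelianization.of p * Abelianization.of q = 1 ∧
      (g = dU (p : ℍˣ) (q : ℍˣ) ∨ g = aU (p : ℍˣ) (q : ℍˣ)) := Iff.rfl

lemma closure_le_Sgrp (K : Subgroup ℍˣ) :
    Subgroup.closure (Mb '' (K : Set ℍˣ)) ≤ Sgrp K := by
  rw [Subgroup.closure_le]
  rintro _ ⟨b, hb, rfl⟩
  have h1 : (⟨b, hb⟩ * ⟨b⁻¹, inv_mem hb⟩ : K) = 1 := Subtype.ext (mul_inv_cancel b)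
  refine mem_Sgrp.mpr ⟨⟨b, hb⟩, ⟨b⁻¹, inv_mem hb⟩, ?_, Or.inr (by rw [Mb_eq])⟩
  rw [← _root_.map_mul, h1, _root_.map_one]

/-- `D1` as a monoid hom. -/
def D1hom : ℍˣ →* GL2H where
  toFun := D1
  map_one' := (D1_eq 1).trans dU_one
  map_mul' a b := by
    show D1 (a * b) = D1 a * D1 b
    rw [D1_eq, D1_eq, D1_eq, dU_mul_dU, mul_one]

open scoped commutatorElement in
lemma D1_commutator_mem (K : Subgroup ℍˣ) {u c : ℍˣ} (hu : u ∈ K) (hc : c ∈ K) :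
    D1 ⁅u, c⁆ ∈ Subgroup.closure (Mb '' (K : Set ℍˣ)) := by
  have key : D1 ⁅u, c⁆ = Mb u * Mb 1 * Mb c * Mb (c * u) := by
    rw [commutatorElement_def, D1_eq, Mb_eq u, Mb_eq 1, Mb_eq c, Mb_eq (c * u),
      aU_mul_aU, dU_mul_aU, aU_mul_aU,
      show u * 1⁻¹ * c * (c * u)⁻¹ = u * c * u⁻¹ * c⁻¹ by group,
      show u⁻¹ * 1 * c⁻¹ * (c * u) = 1 by group]
  rw [key]
  have hmem : ∀ b ∈ K, Mb b ∈ Subgroup.closure (Mb '' (K : Set ℍˣ)) :=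
    fun b hb => Subgroup.subset_closure ⟨b, hb, rfl⟩
  exact mul_mem (mul_mem (mul_mem (hmem u hu) (hmem 1 (one_mem K))) (hmem c hc))
    (hmem (c * u) (mul_mem hc hu))

lemma comm_map (K : Subgroup ℍˣ) :
    (⁅K, K⁆ : Subgroup ℍˣ) = Subgroup.map K.subtype (commutator K) := by
  rw [commutator, Subgroup.map_commutator, ← MonoidHom.range_eq_map, Subgroup.range_subtype]


set_option maxHeartbeats 1000000 in
theorem statement_5 (K : Subgroup ℍˣ) (hK : Finite K) :
    {h : ℍˣ | h ∈ K ∧ D1 h ∈ Subgroup.closure (Mb '' (K : Set ℍˣ))} =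
      ((⁅K, K⁆ : Subgroup ℍˣ) : Set ℍˣ) := by
  have hle : (⁅K, K⁆ : Subgroup ℍˣ) ≤ K :=
    Subgroup.commutator_le.mpr fun g hg h hh => by
      simpa [commutatorElement_def] using
        mul_mem (mul_mem (mul_mem hg hh) (inv_mem hg)) (inv_mem hh)
  ext h
  simp only [Set.mem_setOf_eq, SetLike.mem_coe]
  constructor
  · rintro ⟨hhK, hD1⟩
    obtain ⟨p, q, hpq, hd | ha⟩ := mem_Sgrp.mp (closure_le_Sgrp K hD1)
    · -- diagonal case
      have h00 : (h : ℍ) = ((p : ℍˣ) : ℍ) := by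
        have := congrArg (fun g : GL2H => g.val 0 0) hd
        simpa [D1, D1M, dU] using this
      have h11 : (1 : ℍ) = ((q : ℍˣ) : ℍ) := by
        have := congrArg (fun g : GL2H => g.val 1 1) hd
        simpa [D1, D1M, dU] using this
      have hq1 : q = 1 := Subtype.ext (Units.ext (by simpa using h11.symm))
      have hp : p = ⟨h, hhK⟩ := Subtype.ext (Units.ext h00.symm)
      rw [hq1, _root_.map_one, mul_one, hp] at hpq
      have hker : (⟨h, hhK⟩ : K) ∈ commutator K := by
        rwa [← QuotientGroup.eq_one_iff]
      rw [comm_map]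
      exact ⟨⟨h, hhK⟩, hker, rfl⟩
    · -- antidiagonal case: impossible
      exfalso
      have h00 : (h : ℍ) = 0 := by
        have := congrArg (fun g : GL2H => g.val 0 0) ha
        simpa [D1, D1M, aU] using this
      exact Units.ne_zero h h00
  · intro hcomm
    refine ⟨hle hcomm, ?_⟩
    have hc : (⁅K, K⁆ : Subgroup ℍˣ) ≤
        (Subgroup.closure (Mb '' (K : Set ℍˣ))).comap D1hom := by
      rw [Subgroup.commutator_le]
      intro g₁ h₁ g₂ h₂
      exact D1_commutator_mem K h₁ h₂
    exact hc hcomm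

end
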